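/- The derivative of the cubic f(ρ) = D_4ρ³ + D_5ρ² + D_6ρ + D_7 (with D_4,...,D_7 as in the selfish mining characteristic equation) has two negative real roots r_1 = −1/(ct) − λ/c and r_2 = −1/(ct) − λ(2p+1)/(3c), and f(r_1) = −(1−q)(1−p)λ ≤ 0 and f(r_2) = −((−27pq + 23p + 4)(1−p)λ)/(27p) ≤ 0. -/

import Mathlib

set_option maxHeartbeats 2000000 in
theorem cubic_derivative_roots_and_values
    (lam c t p q : ℝ) (hlam : 0 < lam) (hc : 0 < c) (ht : 0 < t)
    (hp : p ∈ Set.Ioo (0:ℝ) 1) (hq : q ∈ Set.Icc (0:ℝ) 1)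
    (D4 D5 D6 D7 : ℝ)
    (hD4 : D4 = c ^ 3 / (lam ^ 2 * (1 - p) * p))
    (hD5 : D5 = c ^ 2 * (3 + lam * t * (p + 2)) / (lam ^ 2 * t * (1 - p) * p))
    (hD6 : D6 = (3 + lam * t * (2 * p + 1)) * c * (lam * t + 1) / (t ^ 2 * lam ^ 2 * (1 - p) * p))
    (hD7 : D7 = (1 + lam * t * (p + 2) + lam ^ 2 * t ^ 2 * (2 * p + 1)
        + lam ^ 3 * t ^ 3 * p * (p * (1 - q) * (2 - p) + q)) / (lam ^ 2 * t ^ 3 * (1 - p) * p))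
    (f : ℝ → ℝ) (hf : ∀ ρ, f ρ = D4 * ρ ^ 3 + D5 * ρ ^ 2 + D6 * ρ + D7)
    (r1 r2 : ℝ)
    (hr1 : r1 = -(1 / (c * t)) - lam / c)
    (hr2 : r2 = -(1 / (c * t)) - lam * (2 * p + 1) / (3 * c)) :
    r1 < 0 ∧ r2 < 0 ∧ r1 < r2 ∧
    deriv f r1 = 0 ∧ deriv f r2 = 0 ∧
    f r1 = -((1 - q) * (1 - p) * lam) ∧ f r1 ≤ 0 ∧
    f r2 = -((-27 * p * q + 23 * p + 4) * (1 - p) * lam) / (27 * p) ∧ f r2 ≤ 0 := by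
  obtain ⟨hp0, hp1⟩ := hp
  obtain ⟨hq0, hq1⟩ := hq
  have h1p : (0:ℝ) < 1 - p := by linarith
  have hlam' := hlam.ne'
  have hc' := hc.ne'
  have ht' := ht.ne'
  have hp' := hp0.ne'
  have h1p' := h1p.ne'
  have hfun : f = fun ρ => D4 * ρ ^ 3 + D5 * ρ ^ 2 + D6 * ρ + D7 := funext hf
  have hderiv : ∀ x : ℝ, deriv f x = 3 * D4 * x ^ 2 + 2 * D5 * x + D6 := by
    intro x
    have h : HasDerivAt f (3 * D4 * x ^ 2 + 2 * D5 * x + D6) x := by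
      rw [hfun]
      have h0 := ((((hasDerivAt_pow 3 x).const_mul D4).add
        ((hasDerivAt_pow 2 x).const_mul D5)).add
        ((hasDerivAt_id x).const_mul D6)).add (hasDerivAt_const x D7)
      refine h0.congr_deriv ?_
      push_cast
      ring
    exact h.deriv
  have hr1neg : r1 < 0 := by
    rw [hr1]
    have : 0 < 1 / (c * t) := by positivity
    have : 0 < lam / c := by positivity
    linarith
  have hr2neg : r2 < 0 := by
    rw [hr2]
    have : 0 < 1 / (c * t) := by positivity
    have : 0 < lam * (2 * p + 1) / (3 * c) := by positivity
    linarith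
  have hr12 : r1 < r2 := by
    rw [hr1, hr2]
    have h3 : lam * (2 * p + 1) / (3 * c) < lam / c := by
      rw [div_lt_div_iff₀ (by positivity) hc]
      nlinarith [mul_pos hlam hc]
    linarith
  have hfr1 : f r1 = -((1 - q) * (1 - p) * lam) := by
    rw [hf, hr1, hD4, hD5, hD6, hD7]
    field_simp
    ring
  have hfr2 : f r2 = -((-27 * p * q + 23 * p + 4) * (1 - p) * lam) / (27 * p) := by
    rw [hf, hr2, hD4, hD5, hD6, hD7]
    field_simp
    ring
  refine ⟨hr1neg, hr2neg, hr12, ?_, ?_, hfr1, ?_, hfr2, ?_⟩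
  · rw [hderiv, hr1, hD4, hD5, hD6]
    field_simp
    ring
  · rw [hderiv, hr2, hD4, hD5, hD6]
    field_simp
    ring
  · rw [hfr1]
    nlinarith [mul_pos h1p hlam]
  · rw [hfr2]
    have hnum : 0 ≤ (-27 * p * q + 23 * p + 4) * (1 - p) * lam := by
      have : -27 * p * q + 23 * p + 4 ≥ 4 - 4 * p := by nlinarith
      nlinarith [mul_pos h1p hlam]
    apply div_nonpos_of_nonpos_of_nonneg
    · linarith
    · linarith
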